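/- If 0 ≤ ρ ≤ ρ' and h : ℝ → ℝ is a nonnegative ρ-trigonometrically convex function, then h is ρ'-trigonometrically convex. -/

import Mathlib

open Real

lemma phi_nonneg (c : ℝ) (hc0 : 0 < c) (hc1 : c ≤ 1) {x : ℝ} (hx0 : 0 ≤ x) (hxπ : x ≤ π) :
    0 ≤ c * cos (c*x) * sin x - sin (c*x) * cos x := by
  rcases eq_or_lt_of_le hx0 with rfl | hx0
  · simp
  · set φ : ℝ → ℝ := fun y => c * cos (c*y) * sin y - sin (c*y) * cos y with hφ
    have hder : ∀ y : ℝ, HasDerivAt φ ((1 - c^2) * (sin (c*y) * sin y)) y := by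
      intro y
      have h1 : HasDerivAt (fun y : ℝ => c * y) c y := by
        simpa using (hasDerivAt_id y).const_mul c
      have h2 : HasDerivAt (fun y : ℝ => c * cos (c*y) * sin y)
          ((c * (-sin (c*y) * c)) * sin y + (c * cos (c*y)) * cos y) y :=
        ((h1.cos).const_mul c).mul (hasDerivAt_sin y)
      have h3 : HasDerivAt (fun y : ℝ => sin (c*y) * cos y)
          ((cos (c*y) * c) * cos y + sin (c*y) * (-sin y)) y :=
        (h1.sin).mul (hasDerivAt_cos y)
      have := h2.sub h3
      refine this.congr_deriv ?_
      ring
    obtain ⟨ξ, hξ, heq⟩ := exists_hasDerivAt_eq_slope φ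
      (fun y => (1 - c^2) * (sin (c*y) * sin y)) hx0
      (fun y _ => (hder y).continuousAt.continuousWithinAt) (fun y _ => hder y)
    have hφ0 : φ 0 = 0 := by simp [hφ]
    have hξ0 : 0 < ξ := hξ.1
    have hξπ : ξ < π := lt_of_lt_of_le hξ.2 hxπ
    have hs1 : 0 ≤ sin (c*ξ) := sin_nonneg_of_nonneg_of_le_pi (by positivity)
      (le_trans (by nlinarith) hξπ.le)
    have hs2 : 0 ≤ sin ξ := sin_nonneg_of_nonneg_of_le_pi hξ0.le hξπ.le
    have h1c : 0 ≤ 1 - c^2 := by nlinarith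
    have hd : 0 ≤ (1 - c^2) * (sin (c*ξ) * sin ξ) := mul_nonneg h1c (mul_nonneg hs1 hs2)
    rw [heq, hφ0, sub_zero] at hd
    rw [le_div_iff₀ (by linarith : (0:ℝ) < x - 0)] at hd
    simpa [hφ, sub_nonneg] using hd

lemma key_ineq (c : ℝ) (hc0 : 0 < c) (hc1 : c ≤ 1) {a b : ℝ} (ha : 0 < a) (hab : a < b)
    (hb : b < π) : sin (c*a) * sin b ≤ sin (c*b) * sin a := by
  set g : ℝ → ℝ := fun x => sin (c*x) / sin x with hg
  have hsub : Set.Icc a b ⊆ Set.Ioo 0 π := fun x hx =>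
    ⟨lt_of_lt_of_le ha hx.1, lt_of_le_of_lt hx.2 hb⟩
  have hder : ∀ x ∈ Set.Ioo (0:ℝ) π, HasDerivAt g
      ((c * cos (c*x) * sin x - sin (c*x) * cos x) / (sin x)^2) x := by
    intro x hx
    have hsx : sin x ≠ 0 := ne_of_gt (sin_pos_of_pos_of_lt_pi hx.1 hx.2)
    have h1 : HasDerivAt (fun y : ℝ => c * y) c x := by
      simpa using (hasDerivAt_id x).const_mul c
    have h2 : HasDerivAt (fun y : ℝ => sin (c*y)) (cos (c*x) * c) x := h1.sin
    have := h2.div (hasDerivAt_sin x) hsx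
    refine this.congr_deriv ?_
    ring
  obtain ⟨ξ, hξ, heq⟩ := exists_hasDerivAt_eq_slope g _ hab
    (fun x hx => (hder x (hsub hx)).continuousAt.continuousWithinAt)
    (fun x hx => hder x (hsub (Set.Ioo_subset_Icc_self hx)))
  have hξ' : ξ ∈ Set.Ioo (0:ℝ) π := hsub (Set.Ioo_subset_Icc_self hξ)
  have hnum : 0 ≤ c * cos (c*ξ) * sin ξ - sin (c*ξ) * cos ξ :=
    phi_nonneg c hc0 hc1 hξ'.1.le hξ'.2.le
  have hd : 0 ≤ (g b - g a) / (b - a) := heq ▸ div_nonneg hnum (sq_nonneg _)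
  have hga : g a ≤ g b := by
    rw [le_div_iff₀ (by linarith : (0:ℝ) < b - a)] at hd
    linarith [hd]
  have hsa : 0 < sin a := sin_pos_of_pos_of_lt_pi ha (hab.trans hb)
  have hsb : 0 < sin b := sin_pos_of_pos_of_lt_pi (ha.trans hab) hb
  rw [hg] at hga
  rw [div_le_div_iff₀ hsa hsb] at hga
  linarith


/-- If `0 ≤ ρ ≤ ρ'` (`ρ' > 0`) and `h : ℝ → ℝ` is a nonnegative
`ρ`-trigonometrically convex function (a nonnegative constant when `ρ = 0`),
then `h` is `ρ'`-trigonometrically convex. -/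
theorem stmt_13 (ρ ρ' : ℝ) (hρ : 0 ≤ ρ) (hρρ' : ρ ≤ ρ') (hρ' : 0 < ρ')
    (h : ℝ → ℝ) (hpos : ∀ θ, 0 ≤ h θ)
    (hconv : if ρ = 0 then (∀ θ θ' : ℝ, h θ = h θ')
      else ∀ θ₁ θ θ₂ : ℝ, θ₁ < θ → θ < θ₂ → θ₂ - θ₁ < π / ρ →
        h θ ≤ (Real.sin (ρ * (θ₂ - θ)) * h θ₁ + Real.sin (ρ * (θ - θ₁)) * h θ₂) /
          Real.sin (ρ * (θ₂ - θ₁))) :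
    ∀ θ₁ θ θ₂ : ℝ, θ₁ < θ → θ < θ₂ → θ₂ - θ₁ < π / ρ' →
      h θ ≤ (Real.sin (ρ' * (θ₂ - θ)) * h θ₁ + Real.sin (ρ' * (θ - θ₁)) * h θ₂) /
        Real.sin (ρ' * (θ₂ - θ₁)) := by
  intro θ₁ θ θ₂ h1 h2 h3
  have hsπ : ρ' * (θ₂ - θ₁) < π := by
    rw [lt_div_iff₀ hρ'] at h3; linarith [h3]
  have hs0 : 0 < ρ' * (θ₂ - θ₁) := by nlinarith
  have hD : 0 < sin (ρ' * (θ₂ - θ₁)) := sin_pos_of_pos_of_lt_pi hs0 hsπ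
  have hA0 : 0 < ρ' * (θ₂ - θ) := by nlinarith
  have hB0 : 0 < ρ' * (θ - θ₁) := by nlinarith
  have hAπ : ρ' * (θ₂ - θ) < π := by nlinarith
  have hBπ : ρ' * (θ - θ₁) < π := by nlinarith
  have hsA : 0 ≤ sin (ρ' * (θ₂ - θ)) := sin_nonneg_of_nonneg_of_le_pi hA0.le hAπ.le
  have hsB : 0 ≤ sin (ρ' * (θ - θ₁)) := sin_nonneg_of_nonneg_of_le_pi hB0.le hBπ.le
  rcases eq_or_lt_of_le hρ with hρ0 | hρ0
  · -- ρ = 0 : h is constant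
    rw [if_pos hρ0.symm] at hconv
    have hc1 : h θ₁ = h θ := hconv θ₁ θ
    have hc2 : h θ₂ = h θ := hconv θ₂ θ
    rw [le_div_iff₀ hD]
    have hsum : sin (ρ' * (θ₂ - θ₁)) ≤ sin (ρ' * (θ₂ - θ)) + sin (ρ' * (θ - θ₁)) := by
      have : ρ' * (θ₂ - θ₁) = ρ' * (θ₂ - θ) + ρ' * (θ - θ₁) := by ring
      rw [this, sin_add]
      nlinarith [cos_le_one (ρ' * (θ₂ - θ)), cos_le_one (ρ' * (θ - θ₁)),
        neg_one_le_cos (ρ' * (θ₂ - θ)), neg_one_le_cos (ρ' * (θ - θ₁))]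
    rw [hc1, hc2]
    nlinarith [hpos θ]
  · -- ρ > 0
    rw [if_neg (ne_of_gt hρ0)] at hconv
    have hππ : π / ρ' ≤ π / ρ := div_le_div_of_nonneg_left pi_pos.le hρ0 hρρ'
    have hmain := hconv θ₁ θ θ₂ h1 h2 (lt_of_lt_of_le h3 hππ)
    have hDρ : 0 < sin (ρ * (θ₂ - θ₁)) := by
      apply sin_pos_of_pos_of_lt_pi (by nlinarith)
      nlinarith
    set c := ρ / ρ' with hc
    have hc0 : 0 < c := div_pos hρ0 hρ'
    have hc1 : c ≤ 1 := (div_le_one hρ').2 hρρ'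
    have hcc : ∀ x : ℝ, c * (ρ' * x) = ρ * x := by
      intro x; rw [hc]; field_simp
    have k1 : sin (ρ * (θ₂ - θ)) * sin (ρ' * (θ₂ - θ₁)) ≤
        sin (ρ' * (θ₂ - θ)) * sin (ρ * (θ₂ - θ₁)) := by
      have := key_ineq c hc0 hc1 hA0 (by nlinarith : ρ' * (θ₂ - θ) < ρ' * (θ₂ - θ₁)) hsπ
      rw [hcc, hcc] at this; linarith [this]
    have k2 : sin (ρ * (θ - θ₁)) * sin (ρ' * (θ₂ - θ₁)) ≤
        sin (ρ' * (θ - θ₁)) * sin (ρ * (θ₂ - θ₁)) := by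
      have := key_ineq c hc0 hc1 hB0 (by nlinarith : ρ' * (θ - θ₁) < ρ' * (θ₂ - θ₁)) hsπ
      rw [hcc, hcc] at this; linarith [this]
    refine le_trans hmain ?_
    rw [div_le_div_iff₀ hDρ hD]
    nlinarith [mul_le_mul_of_nonneg_right k1 (hpos θ₁), mul_le_mul_of_nonneg_right k2 (hpos θ₂)]
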